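/- arXiv:0712.3598 — 2 statements merged into one kernel-verified Lean document; each statement's English description precedes it below -/
import Mathlib

section
/- Let z ∈ ℂ \ {0}, v ∈ ℂ, x ∈ ℝ, and set x_± = (x ± 6|z|)/3, v₊ = Im(v/√z), v₋ = Re(v/√z). Define g₂ = 4|z|² + |v|² + x²/3 and g₃ = (8/3)|z|²x − (1/3)|v|²x − (2/27)x³ − z v̄² − z̄ v². Then g₂ = x₊² + x₊x₋ + x₋² + (1/4)(x₊−x₋)(v₋² + v₊²) and g₃ = −(x₊+x₋)x₊x₋ − (1/4)(x₊−x₋)(x₊v₋² + x₋v₊²). -/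
open Complex

theorem O4_invariants_in_xpm_vpm
    (z v : ℂ) (x : ℝ) (hz : z ≠ 0)
    (w : ℂ) (hw : w ^ 2 = z)  -- a fixed square root of z
    (xp xm vp vm g₂ g₃ : ℝ)
    (hxp : xp = (x + 6 * ‖z‖) / 3)
    (hxm : xm = (x - 6 * ‖z‖) / 3)
    (hvp : vp = (v / w).im) (hvm : vm = (v / w).re)
    (hg₂ : g₂ = 4 * (‖z‖) ^ 2 + (‖v‖) ^ 2 + x ^ 2 / 3)
    (hg₃ : g₃ = 8 / 3 * (‖z‖) ^ 2 * x - 1 / 3 * (‖v‖) ^ 2 * x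
      - 2 / 27 * x ^ 3 - (z * ((starRingEnd ℂ) v) ^ 2 + (starRingEnd ℂ) z * v ^ 2).re) :
    g₂ = xp ^ 2 + xp * xm + xm ^ 2 + 1 / 4 * (xp - xm) * (vm ^ 2 + vp ^ 2) ∧
    g₃ = -(xp + xm) * xp * xm - 1 / 4 * (xp - xm) * (xp * vm ^ 2 + xm * vp ^ 2) := by
  have hw0 : w ≠ 0 := by
    intro h; apply hz; rw [← hw, h]; ring
  set a := ‖z‖ with ha
  have ha0 : 0 < a := by simpa [ha] using (norm_pos_iff.mpr hz)
  have hwa : ‖w‖ ^ 2 = a := by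
    rw [ha, ← hw, norm_pow]
  have h1 : vm ^ 2 + vp ^ 2 = ‖v‖ ^ 2 / a := by
    rw [hvm, hvp]
    have e : (v / w).re ^ 2 + (v / w).im ^ 2 = Complex.normSq (v / w) := by
      rw [Complex.normSq_apply]; ring
    rw [e, ← Complex.sq_norm, norm_div, div_pow, hwa]
  have h2 : (z * ((starRingEnd ℂ) v) ^ 2 + (starRingEnd ℂ) z * v ^ 2).re
      = 2 * a ^ 2 * (vm ^ 2 - vp ^ 2) := by
    have hzu : (starRingEnd ℂ) z * v ^ 2 = ((a : ℂ)) ^ 2 * (v / w) ^ 2 := by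
      have : ((a : ℂ)) ^ 2 = (starRingEnd ℂ) z * z := by
        rw [← Complex.normSq_eq_conj_mul_self, ← Complex.sq_norm]
        push_cast
        ring
      rw [this, ← hw]
      field_simp
    have hconj : z * ((starRingEnd ℂ) v) ^ 2 = (starRingEnd ℂ) ((starRingEnd ℂ) z * v ^ 2) := by
      simp [map_mul, map_pow]
    rw [hconj, hzu, Complex.add_re, Complex.conj_re]
    have : (((a : ℂ)) ^ 2 * (v / w) ^ 2).re = a ^ 2 * ((v / w).re ^ 2 - (v / w).im ^ 2) := by
      simp [Complex.mul_re, Complex.mul_im, pow_two]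
    rw [this, hvm, hvp]
    ring
  have h1' : ‖v‖ ^ 2 = a * (vm ^ 2 + vp ^ 2) := by
    rw [h1]; field_simp
  constructor
  · rw [hg₂, hxp, hxm, h1']
    ring
  · rw [hg₃, hxp, hxm, h2, h1']
    ring
end

section
/- The complete elliptic integrals satisfy the differentiation formulas dK/d(k²) = (E(k) − k'²K(k))/(2k²k'²) and dE/d(k²) = (E(k) − K(k))/(2k²), for 0 < k < 1 with k'² = 1−k². -/
open Real intervalIntegral

/-- The complete elliptic integral of the first kind as a function of the parameter `m = k²`. -/
noncomputable def ellKm (m : ℝ) : ℝ :=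
  ∫ t in (0:ℝ)..1, 1 / Real.sqrt ((1 - t ^ 2) * (1 - m * t ^ 2))

/-- The complete elliptic integral of the second kind as a function of the parameter `m = k²`. -/
noncomputable def ellEm (m : ℝ) : ℝ :=
  ∫ t in (0:ℝ)..1, Real.sqrt ((1 - m * t ^ 2) / (1 - t ^ 2))

namespace EllAux

open Set MeasureTheory Metric

/-- Derivative (in `m`) of the `K` integrand. -/
noncomputable def Kd (m t : ℝ) : ℝ :=
  t ^ 2 / (2 * Real.sqrt (1 - t ^ 2) * Real.sqrt (1 - m * t ^ 2) ^ 3)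

/-- Derivative (in `m`) of the `E` integrand. -/
noncomputable def Ed (m t : ℝ) : ℝ :=
  -(t ^ 2) / (2 * Real.sqrt (1 - t ^ 2) * Real.sqrt (1 - m * t ^ 2))

/-- Derivative (in `t`) of `t * sqrt(1-t²)/sqrt(1-m t²)`. -/
noncomputable def gd (m t : ℝ) : ℝ :=
  (1 - 2 * t ^ 2 + m * t ^ 4) / (Real.sqrt (1 - t ^ 2) * Real.sqrt (1 - m * t ^ 2) ^ 3)

lemma one_sub_mul_sq_pos {m t : ℝ} (hm : m < 1) (ht0 : 0 ≤ t) (ht1 : t ≤ 1) :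
    0 < 1 - m * t ^ 2 := by
  have ht2 : t ^ 2 ≤ 1 := by nlinarith
  rcases le_or_gt 0 m with h | h
  · nlinarith [mul_nonneg h (by linarith : (0:ℝ) ≤ 1 - t ^ 2)]
  · nlinarith [sq_nonneg t]

lemma intInt_inv_sqrt :
    IntervalIntegrable (fun t : ℝ => 1 / Real.sqrt (1 - t ^ 2)) volume 0 1 := by
  have h0 : IntervalIntegrable (fun x : ℝ => x ^ (-(1/2) : ℝ)) volume 0 1 :=
    intervalIntegrable_rpow' (by norm_num)
  have h1 : IntervalIntegrable (fun x : ℝ => (1 - x) ^ (-(1/2) : ℝ)) volume 0 1 := by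
    have := (h0.comp_sub_left 1).symm
    norm_num at this
    exact this
  refine h1.mono_fun' ?_ ?_
  · exact (measurable_const.div
      (Real.continuous_sqrt.comp (continuous_const.sub (continuous_pow 2))).measurable).aestronglyMeasurable
  · rw [Filter.EventuallyLE, ae_restrict_iff' measurableSet_uIoc]
    refine Filter.Eventually.of_forall fun t ht => ?_
    rw [uIoc_of_le (by norm_num : (0:ℝ) ≤ 1)] at ht
    have ht0 : 0 < t := ht.1
    have ht1 : t ≤ 1 := ht.2
    have h1t : 0 ≤ 1 - t := by linarith
    rw [Real.norm_eq_abs, abs_of_nonneg (by positivity),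
      Real.rpow_neg h1t, ← Real.sqrt_eq_rpow]
    rcases eq_or_lt_of_le ht1 with h | h
    · subst h
      norm_num
    · have key : 1 - t ≤ 1 - t ^ 2 := by nlinarith
      rw [inv_eq_one_div]
      apply one_div_le_one_div_of_le
      · exact Real.sqrt_pos.2 (by linarith)
      · exact Real.sqrt_le_sqrt key

lemma ae_uIoc_Ioo : ∀ᵐ t : ℝ ∂volume, t ∈ uIoc (0:ℝ) 1 → t ∈ Ioo (0:ℝ) 1 := by
  filter_upwards [compl_mem_ae_iff.2 (measure_singleton (1:ℝ))] with t ht htI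
  rw [uIoc_of_le (by norm_num : (0:ℝ) ≤ 1)] at htI
  have : t ≠ 1 := by simpa using ht
  exact ⟨htI.1, lt_of_le_of_ne htI.2 this⟩

lemma intInt_of_bound {f : ℝ → ℝ} (hf : Measurable f) (c : ℝ)
    (hb : ∀ t ∈ Ioo (0:ℝ) 1, |f t| ≤ c * (1 / Real.sqrt (1 - t ^ 2))) :
    IntervalIntegrable f volume 0 1 := by
  refine (intInt_inv_sqrt.const_mul c).mono_fun' hf.aestronglyMeasurable ?_
  rw [Filter.EventuallyLE, ae_restrict_iff' measurableSet_uIoc]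
  filter_upwards [ae_uIoc_Ioo] with t h1 h2
  rw [Real.norm_eq_abs]
  exact hb t (h1 h2)

lemma hasDerivAt_K (m t : ℝ) (hm1 : m < 1) (ht : t ∈ Ioo (0:ℝ) 1) :
    HasDerivAt (fun x => 1 / Real.sqrt ((1 - t ^ 2) * (1 - x * t ^ 2))) (Kd m t) m := by
  have ht2 : 0 < 1 - t ^ 2 := by nlinarith [ht.1, ht.2]
  have hmt : 0 < 1 - m * t ^ 2 := one_sub_mul_sq_pos hm1 ht.1.le ht.2.le
  have ha : 0 < Real.sqrt (1 - t ^ 2) := Real.sqrt_pos.2 ht2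
  have hs : 0 < Real.sqrt (1 - m * t ^ 2) := Real.sqrt_pos.2 hmt
  have h1 : HasDerivAt (fun x : ℝ => 1 - x * t ^ 2) (-(t ^ 2)) m := by
    simpa using ((hasDerivAt_id m).mul_const (t ^ 2)).const_sub 1
  have h2 : HasDerivAt (fun x : ℝ => Real.sqrt (1 - x * t ^ 2))
      (1 / (2 * Real.sqrt (1 - m * t ^ 2)) * -(t ^ 2)) m :=
    (Real.hasDerivAt_sqrt hmt.ne').comp m h1
  have h3 := (h2.const_mul (Real.sqrt (1 - t ^ 2))).inv (by positivity)
  have heq : (fun x : ℝ => 1 / Real.sqrt ((1 - t ^ 2) * (1 - x * t ^ 2)))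
      = fun x => (Real.sqrt (1 - t ^ 2) * Real.sqrt (1 - x * t ^ 2))⁻¹ := by
    funext x; rw [Real.sqrt_mul ht2.le, one_div]
  rw [heq]
  refine h3.congr_deriv ?_
  unfold Kd
  field_simp

lemma hasDerivAt_E (m t : ℝ) (hm1 : m < 1) (ht : t ∈ Ioo (0:ℝ) 1) :
    HasDerivAt (fun x => Real.sqrt ((1 - x * t ^ 2) / (1 - t ^ 2))) (Ed m t) m := by
  have ht2 : 0 < 1 - t ^ 2 := by nlinarith [ht.1, ht.2]
  have hmt : 0 < 1 - m * t ^ 2 := one_sub_mul_sq_pos hm1 ht.1.le ht.2.le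
  have ha : 0 < Real.sqrt (1 - t ^ 2) := Real.sqrt_pos.2 ht2
  have hs : 0 < Real.sqrt (1 - m * t ^ 2) := Real.sqrt_pos.2 hmt
  have h1 : HasDerivAt (fun x : ℝ => 1 - x * t ^ 2) (-(t ^ 2)) m := by
    simpa using ((hasDerivAt_id m).mul_const (t ^ 2)).const_sub 1
  have h2 : HasDerivAt (fun x : ℝ => Real.sqrt (1 - x * t ^ 2))
      (1 / (2 * Real.sqrt (1 - m * t ^ 2)) * -(t ^ 2)) m :=
    (Real.hasDerivAt_sqrt hmt.ne').comp m h1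
  have base := h2.div_const (Real.sqrt (1 - t ^ 2))
  have main : HasDerivAt (fun x => Real.sqrt (1 - x * t ^ 2) / Real.sqrt (1 - t ^ 2))
      (Ed m t) m := by
    refine base.congr_deriv ?_
    unfold Ed
    ring
  refine main.congr_of_eventuallyEq ?_
  filter_upwards [Iio_mem_nhds hm1] with x hx
  have hx' : 0 < 1 - x * t ^ 2 := one_sub_mul_sq_pos hx ht.1.le ht.2.le
  rw [Real.sqrt_div hx'.le]

lemma hasDerivAt_g (m t : ℝ) (hm1 : m < 1) (ht : t ∈ Ioo (0:ℝ) 1) :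
    HasDerivAt (fun u => u * Real.sqrt (1 - u ^ 2) / Real.sqrt (1 - m * u ^ 2)) (gd m t) t := by
  have ht2 : 0 < 1 - t ^ 2 := by nlinarith [ht.1, ht.2]
  have hmt : 0 < 1 - m * t ^ 2 := one_sub_mul_sq_pos hm1 ht.1.le ht.2.le
  have ha : 0 < Real.sqrt (1 - t ^ 2) := Real.sqrt_pos.2 ht2
  have hs : 0 < Real.sqrt (1 - m * t ^ 2) := Real.sqrt_pos.2 hmt
  have d1 : HasDerivAt (fun u : ℝ => 1 - u ^ 2) (-(2 * t)) t := by
    simpa using (hasDerivAt_pow 2 t).const_sub 1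
  have d2 : HasDerivAt (fun u : ℝ => Real.sqrt (1 - u ^ 2))
      (1 / (2 * Real.sqrt (1 - t ^ 2)) * -(2 * t)) t :=
    (Real.hasDerivAt_sqrt ht2.ne').comp t d1
  have d3 : HasDerivAt (fun u : ℝ => u * Real.sqrt (1 - u ^ 2))
      (1 * Real.sqrt (1 - t ^ 2) + t * (1 / (2 * Real.sqrt (1 - t ^ 2)) * -(2 * t))) t :=
    (hasDerivAt_id t).mul d2
  have d4 : HasDerivAt (fun u : ℝ => 1 - m * u ^ 2) (-(m * (2 * t))) t := by
    have := ((hasDerivAt_pow 2 t).const_mul m).const_sub 1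
    simpa [mul_assoc] using this
  have d5 : HasDerivAt (fun u : ℝ => Real.sqrt (1 - m * u ^ 2))
      (1 / (2 * Real.sqrt (1 - m * t ^ 2)) * -(m * (2 * t))) t :=
    (Real.hasDerivAt_sqrt hmt.ne').comp t d4
  have d6 := d5.inv hs.ne'
  have d7 := d3.mul d6
  have heq : (fun u : ℝ => u * Real.sqrt (1 - u ^ 2) / Real.sqrt (1 - m * u ^ 2))
      = fun u => u * Real.sqrt (1 - u ^ 2) * (Real.sqrt (1 - m * u ^ 2))⁻¹ := by
    funext u; rw [div_eq_mul_inv]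
  rw [heq]
  unfold gd
  refine d7.congr_deriv ?_
  simp only [Pi.inv_apply]
  set a := Real.sqrt (1 - t ^ 2) with ha'
  set s := Real.sqrt (1 - m * t ^ 2) with hs'
  have ha2 : a ^ 2 = 1 - t ^ 2 := Real.sq_sqrt ht2.le
  have hs2 : s ^ 2 = 1 - m * t ^ 2 := Real.sq_sqrt hmt.le
  rw [show (1 : ℝ) - 2 * t ^ 2 + m * t ^ 4
      = (1 - t ^ 2) * (1 - m * t ^ 2) - t ^ 2 * (1 - m * t ^ 2) + m * t ^ 2 * (1 - t ^ 2)
      by ring, ← ha2, ← hs2]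
  field_simp
  ring

lemma abs_Kd_le {x t c : ℝ} (hx0 : 0 ≤ x) (hxc : x ≤ c) (hc : c < 1)
    (ht : t ∈ Ioo (0:ℝ) 1) :
    |Kd x t| ≤ (1 / Real.sqrt (1 - c) ^ 3) * (1 / Real.sqrt (1 - t ^ 2)) := by
  have ht2 : 0 < 1 - t ^ 2 := by nlinarith [ht.1, ht.2]
  have ha : 0 < Real.sqrt (1 - t ^ 2) := Real.sqrt_pos.2 ht2
  have hc0 : 0 < 1 - c := by linarith
  have hbc : 0 < Real.sqrt (1 - c) := Real.sqrt_pos.2 hc0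
  have hxt : 1 - c ≤ 1 - x * t ^ 2 := by nlinarith [sq_nonneg t, ht.2]
  have hs : Real.sqrt (1 - c) ≤ Real.sqrt (1 - x * t ^ 2) := Real.sqrt_le_sqrt hxt
  have hsp : 0 < Real.sqrt (1 - x * t ^ 2) := lt_of_lt_of_le hbc hs
  unfold Kd
  rw [abs_div, abs_of_nonneg (by positivity : (0:ℝ) ≤ t ^ 2),
    abs_of_nonneg (by positivity : (0:ℝ) ≤ 2 * Real.sqrt (1 - t ^ 2) * Real.sqrt (1 - x * t ^ 2) ^ 3)]
  have h1 : t ^ 2 ≤ 1 := by nlinarith [ht.2, ht.1]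
  calc t ^ 2 / (2 * Real.sqrt (1 - t ^ 2) * Real.sqrt (1 - x * t ^ 2) ^ 3)
      ≤ 1 / (Real.sqrt (1 - c) ^ 3 * Real.sqrt (1 - t ^ 2)) := by
        apply div_le_div₀ (by norm_num) h1 (by positivity)
        calc Real.sqrt (1 - c) ^ 3 * Real.sqrt (1 - t ^ 2)
            ≤ Real.sqrt (1 - x * t ^ 2) ^ 3 * Real.sqrt (1 - t ^ 2) := by gcongr
          _ ≤ 2 * Real.sqrt (1 - t ^ 2) * Real.sqrt (1 - x * t ^ 2) ^ 3 := by
              nlinarith [mul_pos (pow_pos hsp 3) ha]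
    _ = (1 / Real.sqrt (1 - c) ^ 3) * (1 / Real.sqrt (1 - t ^ 2)) := by
        rw [div_mul_div_comm, mul_one]

lemma abs_Ed_le {x t c : ℝ} (hx0 : 0 ≤ x) (hxc : x ≤ c) (hc : c < 1)
    (ht : t ∈ Ioo (0:ℝ) 1) :
    |Ed x t| ≤ (1 / Real.sqrt (1 - c)) * (1 / Real.sqrt (1 - t ^ 2)) := by
  have ht2 : 0 < 1 - t ^ 2 := by nlinarith [ht.1, ht.2]
  have ha : 0 < Real.sqrt (1 - t ^ 2) := Real.sqrt_pos.2 ht2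
  have hc0 : 0 < 1 - c := by linarith
  have hbc : 0 < Real.sqrt (1 - c) := Real.sqrt_pos.2 hc0
  have hxt : 1 - c ≤ 1 - x * t ^ 2 := by nlinarith [sq_nonneg t, ht.2]
  have hs : Real.sqrt (1 - c) ≤ Real.sqrt (1 - x * t ^ 2) := Real.sqrt_le_sqrt hxt
  have hsp : 0 < Real.sqrt (1 - x * t ^ 2) := lt_of_lt_of_le hbc hs
  have h1 : t ^ 2 ≤ 1 := by nlinarith [ht.2, ht.1]
  unfold Ed
  rw [abs_div, abs_neg, abs_of_nonneg (by positivity : (0:ℝ) ≤ t ^ 2),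
    abs_of_nonneg (by positivity : (0:ℝ) ≤ 2 * Real.sqrt (1 - t ^ 2) * Real.sqrt (1 - x * t ^ 2))]
  calc t ^ 2 / (2 * Real.sqrt (1 - t ^ 2) * Real.sqrt (1 - x * t ^ 2))
      ≤ 1 / (Real.sqrt (1 - c) * Real.sqrt (1 - t ^ 2)) := by
        apply div_le_div₀ (by norm_num) h1 (by positivity)
        nlinarith [mul_le_mul_of_nonneg_right hs ha.le, mul_pos hsp ha]
    _ = (1 / Real.sqrt (1 - c)) * (1 / Real.sqrt (1 - t ^ 2)) := by
        rw [div_mul_div_comm, mul_one]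

lemma cont_one_sub_sq : Continuous (fun t : ℝ => 1 - t ^ 2) :=
  continuous_const.sub (continuous_pow 2)

lemma cont_one_sub_mul_sq (m : ℝ) : Continuous (fun t : ℝ => 1 - m * t ^ 2) :=
  continuous_const.sub (continuous_const.mul (continuous_pow 2))

lemma measurable_Kint (m : ℝ) :
    Measurable (fun t : ℝ => 1 / Real.sqrt ((1 - t ^ 2) * (1 - m * t ^ 2))) :=
  measurable_const.div
    (Real.continuous_sqrt.comp (cont_one_sub_sq.mul (cont_one_sub_mul_sq m))).measurable

lemma measurable_Eint (m : ℝ) :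
    Measurable (fun t : ℝ => Real.sqrt ((1 - m * t ^ 2) / (1 - t ^ 2))) :=
  Real.continuous_sqrt.measurable.comp
    ((cont_one_sub_mul_sq m).measurable.div cont_one_sub_sq.measurable)

lemma measurable_Kd (m : ℝ) : Measurable (Kd m) := by
  unfold Kd
  exact (continuous_pow 2).measurable.div
    ((continuous_const.mul (Real.continuous_sqrt.comp cont_one_sub_sq)).mul
      ((Real.continuous_sqrt.comp (cont_one_sub_mul_sq m)).pow 3)).measurable

lemma measurable_Ed (m : ℝ) : Measurable (Ed m) := by
  unfold Ed
  exact ((continuous_pow 2).neg.measurable).div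
    ((continuous_const.mul (Real.continuous_sqrt.comp cont_one_sub_sq)).mul
      (Real.continuous_sqrt.comp (cont_one_sub_mul_sq m))).measurable

lemma measurable_gd (m : ℝ) : Measurable (gd m) := by
  unfold gd
  exact ((continuous_const.sub (continuous_const.mul (continuous_pow 2))).add
      (continuous_const.mul (continuous_pow 4))).measurable.div
    ((Real.continuous_sqrt.comp cont_one_sub_sq).mul
      ((Real.continuous_sqrt.comp (cont_one_sub_mul_sq m)).pow 3)).measurable

lemma intInt_Kint {m : ℝ} (hm0 : 0 ≤ m) (hm1 : m < 1) :
    IntervalIntegrable (fun t : ℝ => 1 / Real.sqrt ((1 - t ^ 2) * (1 - m * t ^ 2)))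
      volume 0 1 := by
  apply intInt_of_bound (measurable_Kint m) (1 / Real.sqrt (1 - m))
  intro t ht
  have ht2 : 0 < 1 - t ^ 2 := by nlinarith [ht.1, ht.2]
  have ha : 0 < Real.sqrt (1 - t ^ 2) := Real.sqrt_pos.2 ht2
  have hm' : 0 < 1 - m := by linarith
  have hbm : 0 < Real.sqrt (1 - m) := Real.sqrt_pos.2 hm'
  have hxt : 1 - m ≤ 1 - m * t ^ 2 := by nlinarith [sq_nonneg t, ht.2]
  have hs : Real.sqrt (1 - m) ≤ Real.sqrt (1 - m * t ^ 2) := Real.sqrt_le_sqrt hxt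
  have hsp : 0 < Real.sqrt (1 - m * t ^ 2) := lt_of_lt_of_le hbm hs
  rw [Real.sqrt_mul ht2.le, abs_of_nonneg (by positivity)]
  calc 1 / (Real.sqrt (1 - t ^ 2) * Real.sqrt (1 - m * t ^ 2))
      ≤ 1 / (Real.sqrt (1 - m) * Real.sqrt (1 - t ^ 2)) := by
        apply div_le_div₀ (by norm_num) le_rfl (by positivity)
        nlinarith [mul_le_mul_of_nonneg_right hs ha.le, mul_pos hsp ha]
    _ = (1 / Real.sqrt (1 - m)) * (1 / Real.sqrt (1 - t ^ 2)) := by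
        rw [div_mul_div_comm, mul_one]

lemma intInt_Eint {m : ℝ} (hm0 : 0 ≤ m) (hm1 : m < 1) :
    IntervalIntegrable (fun t : ℝ => Real.sqrt ((1 - m * t ^ 2) / (1 - t ^ 2)))
      volume 0 1 := by
  apply intInt_of_bound (measurable_Eint m) 1
  intro t ht
  have ht2 : 0 < 1 - t ^ 2 := by nlinarith [ht.1, ht.2]
  have ha : 0 < Real.sqrt (1 - t ^ 2) := Real.sqrt_pos.2 ht2
  have hmt : 0 < 1 - m * t ^ 2 := one_sub_mul_sq_pos hm1 ht.1.le ht.2.le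
  rw [abs_of_nonneg (Real.sqrt_nonneg _), one_mul, Real.sqrt_div hmt.le]
  have h1 : Real.sqrt (1 - m * t ^ 2) ≤ 1 := by
    have h2 : Real.sqrt (1 - m * t ^ 2) ≤ Real.sqrt 1 :=
      Real.sqrt_le_sqrt (by nlinarith [sq_nonneg t])
    simpa using h2
  gcongr

lemma intInt_Kd {m : ℝ} (hm0 : 0 ≤ m) (hm1 : m < 1) :
    IntervalIntegrable (Kd m) volume 0 1 := by
  apply intInt_of_bound (measurable_Kd m) (1 / Real.sqrt (1 - m) ^ 3)
  intro t ht
  exact abs_Kd_le hm0 le_rfl hm1 ht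

lemma intInt_Ed {m : ℝ} (hm0 : 0 ≤ m) (hm1 : m < 1) :
    IntervalIntegrable (Ed m) volume 0 1 := by
  apply intInt_of_bound (measurable_Ed m) (1 / Real.sqrt (1 - m))
  intro t ht
  exact abs_Ed_le hm0 le_rfl hm1 ht

lemma intInt_gd {m : ℝ} (hm0 : 0 ≤ m) (hm1 : m < 1) :
    IntervalIntegrable (gd m) volume 0 1 := by
  apply intInt_of_bound (measurable_gd m) (4 / Real.sqrt (1 - m) ^ 3)
  intro t ht
  have ht2 : 0 < 1 - t ^ 2 := by nlinarith [ht.1, ht.2]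
  have ha : 0 < Real.sqrt (1 - t ^ 2) := Real.sqrt_pos.2 ht2
  have hm' : 0 < 1 - m := by linarith
  have hbm : 0 < Real.sqrt (1 - m) := Real.sqrt_pos.2 hm'
  have hxt : 1 - m ≤ 1 - m * t ^ 2 := by nlinarith [sq_nonneg t, ht.2]
  have hs : Real.sqrt (1 - m) ≤ Real.sqrt (1 - m * t ^ 2) := Real.sqrt_le_sqrt hxt
  have hsp : 0 < Real.sqrt (1 - m * t ^ 2) := lt_of_lt_of_le hbm hs
  have h1 : t ^ 2 ≤ 1 := by nlinarith [ht.2, ht.1]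
  unfold gd
  rw [abs_div, abs_of_nonneg
    (by positivity : (0:ℝ) ≤ Real.sqrt (1 - t ^ 2) * Real.sqrt (1 - m * t ^ 2) ^ 3)]
  have hnum : |1 - 2 * t ^ 2 + m * t ^ 4| ≤ 4 := by
    rw [abs_le]
    constructor <;> nlinarith [sq_nonneg t, sq_nonneg (t ^ 2), ht.1, ht.2]
  calc |1 - 2 * t ^ 2 + m * t ^ 4| / (Real.sqrt (1 - t ^ 2) * Real.sqrt (1 - m * t ^ 2) ^ 3)
      ≤ 4 / (Real.sqrt (1 - m) ^ 3 * Real.sqrt (1 - t ^ 2)) := by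
        apply div_le_div₀ (by norm_num) hnum (by positivity)
        calc Real.sqrt (1 - m) ^ 3 * Real.sqrt (1 - t ^ 2)
            ≤ Real.sqrt (1 - m * t ^ 2) ^ 3 * Real.sqrt (1 - t ^ 2) := by gcongr
          _ = Real.sqrt (1 - t ^ 2) * Real.sqrt (1 - m * t ^ 2) ^ 3 := by ring
    _ = (4 / Real.sqrt (1 - m) ^ 3) * (1 / Real.sqrt (1 - t ^ 2)) := by
        rw [div_mul_div_comm, mul_one]

lemma intInt_h {m : ℝ} (hm1 : m < 1) :
    IntervalIntegrable (fun t : ℝ => Real.sqrt (1 - t ^ 2) / Real.sqrt (1 - m * t ^ 2))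
      volume 0 1 := by
  apply ContinuousOn.intervalIntegrable
  apply ContinuousOn.div
  · exact (Real.continuous_sqrt.comp (by continuity)).continuousOn
  · exact (Real.continuous_sqrt.comp (by continuity)).continuousOn
  · intro x hx
    rw [uIcc_of_le (by norm_num : (0:ℝ) ≤ 1)] at hx
    exact (Real.sqrt_pos.2 (one_sub_mul_sq_pos hm1 hx.1 hx.2)).ne'

lemma integral_gd_eq_zero {m : ℝ} (hm1 : m < 1) (hm0 : 0 ≤ m) :
    ∫ t in (0:ℝ)..1, gd m t = 0 := by
  have h := intervalIntegral.integral_eq_sub_of_hasDeriv_right_of_le (a := 0) (b := 1)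
      (f := fun u => u * Real.sqrt (1 - u ^ 2) / Real.sqrt (1 - m * u ^ 2))
      (f' := gd m) (by norm_num)
      (by
        apply ContinuousOn.div
        · exact (continuous_id.mul (Real.continuous_sqrt.comp (by continuity))).continuousOn
        · exact (Real.continuous_sqrt.comp (by continuity)).continuousOn
        · intro x hx
          exact (Real.sqrt_pos.2 (one_sub_mul_sq_pos hm1 hx.1 hx.2)).ne')
      (fun x hx => (hasDerivAt_g m x hm1 hx).hasDerivWithinAt)
      (intInt_gd hm0 hm1)
  rw [h]
  norm_num

lemma integral_Ed_eq {m : ℝ} (hm0 : 0 < m) (hm1 : m < 1) :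
    ∫ t in (0:ℝ)..1, Ed m t = (ellEm m - ellKm m) / (2 * m) := by
  have IK := intInt_Kint hm0.le hm1
  have IE := intInt_Eint hm0.le hm1
  have key : ellEm m - ellKm m
      = ∫ t in (0:ℝ)..1, (Real.sqrt ((1 - m * t ^ 2) / (1 - t ^ 2))
          - 1 / Real.sqrt ((1 - t ^ 2) * (1 - m * t ^ 2))) :=
    (intervalIntegral.integral_sub IE IK).symm
  have congr1 : ∫ t in (0:ℝ)..1, (Real.sqrt ((1 - m * t ^ 2) / (1 - t ^ 2))
          - 1 / Real.sqrt ((1 - t ^ 2) * (1 - m * t ^ 2)))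
      = ∫ t in (0:ℝ)..1, (2 * m) * Ed m t := by
    apply intervalIntegral.integral_congr_ae
    filter_upwards [ae_uIoc_Ioo] with t h1 h2
    have ht := h1 h2
    have ht2 : 0 < 1 - t ^ 2 := by nlinarith [ht.1, ht.2]
    have hmt : 0 < 1 - m * t ^ 2 := one_sub_mul_sq_pos hm1 ht.1.le ht.2.le
    have ha : 0 < Real.sqrt (1 - t ^ 2) := Real.sqrt_pos.2 ht2
    have hs : 0 < Real.sqrt (1 - m * t ^ 2) := Real.sqrt_pos.2 hmt
    rw [Real.sqrt_div hmt.le, Real.sqrt_mul ht2.le]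
    unfold Ed
    set a := Real.sqrt (1 - t ^ 2) with ha'
    set s := Real.sqrt (1 - m * t ^ 2) with hs'
    have hs2 : s ^ 2 = 1 - m * t ^ 2 := Real.sq_sqrt hmt.le
    calc s / a - 1 / (a * s) = (s ^ 2 - 1) / (a * s) := by field_simp
      _ = 2 * m * (-(t ^ 2) / (2 * a * s)) := by rw [hs2]; field_simp; ring
  rw [key, congr1, intervalIntegral.integral_const_mul]
  field_simp

lemma integral_Kd_eq {m : ℝ} (hm0 : 0 < m) (hm1 : m < 1) :
    ∫ t in (0:ℝ)..1, Kd m t = (ellEm m - (1 - m) * ellKm m) / (2 * m * (1 - m)) := by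
  have IK := intInt_Kint hm0.le hm1
  have IE := intInt_Eint hm0.le hm1
  have IKd := intInt_Kd hm0.le hm1
  have Igd := intInt_gd hm0.le hm1
  have key : ellEm m - (1 - m) * ellKm m
      = ∫ t in (0:ℝ)..1, (Real.sqrt ((1 - m * t ^ 2) / (1 - t ^ 2))
          - (1 - m) * (1 / Real.sqrt ((1 - t ^ 2) * (1 - m * t ^ 2)))) := by
    rw [intervalIntegral.integral_sub IE (IK.const_mul (1 - m)),
      intervalIntegral.integral_const_mul]
    rfl
  have congr1 : ∫ t in (0:ℝ)..1, (Real.sqrt ((1 - m * t ^ 2) / (1 - t ^ 2))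
          - (1 - m) * (1 / Real.sqrt ((1 - t ^ 2) * (1 - m * t ^ 2))))
      = ∫ t in (0:ℝ)..1, m * (2 * (1 - m) * Kd m t + gd m t) := by
    apply intervalIntegral.integral_congr_ae
    filter_upwards [ae_uIoc_Ioo] with t h1 h2
    have ht := h1 h2
    have ht2 : 0 < 1 - t ^ 2 := by nlinarith [ht.1, ht.2]
    have hmt : 0 < 1 - m * t ^ 2 := one_sub_mul_sq_pos hm1 ht.1.le ht.2.le
    have ha : 0 < Real.sqrt (1 - t ^ 2) := Real.sqrt_pos.2 ht2
    have hs : 0 < Real.sqrt (1 - m * t ^ 2) := Real.sqrt_pos.2 hmt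
    rw [Real.sqrt_div hmt.le, Real.sqrt_mul ht2.le]
    unfold Kd gd
    set a := Real.sqrt (1 - t ^ 2) with ha'
    set s := Real.sqrt (1 - m * t ^ 2) with hs'
    have ha : 0 < a := Real.sqrt_pos.2 ht2
    have hs : 0 < s := Real.sqrt_pos.2 hmt
    have ha2 : a ^ 2 = 1 - t ^ 2 := Real.sq_sqrt ht2.le
    have hs2 : s ^ 2 = 1 - m * t ^ 2 := Real.sq_sqrt hmt.le
    calc s / a - (1 - m) * (1 / (a * s)) = (s ^ 2 - (1 - m)) / (a * s) := by
          field_simp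
      _ = (m - m * t ^ 2) / (a * s) := by rw [hs2]; ring
      _ = m * (1 - t ^ 2) * (1 - m * t ^ 2) / (a * s ^ 3) := by
          rw [← hs2]; field_simp
      _ = m * (2 * (1 - m) * (t ^ 2 / (2 * a * s ^ 3))
            + (1 - 2 * t ^ 2 + m * t ^ 4) / (a * s ^ 3)) := by
          field_simp; ring
  have expand : ∫ t in (0:ℝ)..1, m * (2 * (1 - m) * Kd m t + gd m t)
      = m * (2 * (1 - m) * ∫ t in (0:ℝ)..1, Kd m t) := by
    rw [intervalIntegral.integral_const_mul,
      intervalIntegral.integral_add (IKd.const_mul _) Igd,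
      intervalIntegral.integral_const_mul, integral_gd_eq_zero hm1 hm0.le, add_zero]
  have final : ellEm m - (1 - m) * ellKm m
      = 2 * m * (1 - m) * ∫ t in (0:ℝ)..1, Kd m t := by
    rw [key, congr1, expand]; ring
  rw [eq_div_iff (mul_pos (mul_pos two_pos hm0) (by linarith : (0:ℝ) < 1 - m)).ne']
  linarith [final]

end EllAux

open EllAux Set MeasureTheory Metric in
/-- `dK/d(k²) = (E − k'²K)/(2k²k'²)` and `dE/d(k²) = (E − K)/(2k²)` with `k'² = 1 − k²`. -/
theorem ellK_ellE_deriv (k : ℝ) (hk0 : 0 < k) (hk1 : k < 1) :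
    HasDerivAt ellKm
      ((ellEm (k ^ 2) - (1 - k ^ 2) * ellKm (k ^ 2)) / (2 * k ^ 2 * (1 - k ^ 2))) (k ^ 2) ∧
    HasDerivAt ellEm ((ellEm (k ^ 2) - ellKm (k ^ 2)) / (2 * k ^ 2)) (k ^ 2) := by
  have hm0 : 0 < k ^ 2 := by positivity
  have hm1 : k ^ 2 < 1 := by nlinarith
  set m₀ := k ^ 2 with hm₀
  set b := (1 + m₀) / 2 with hb
  have hb1 : b < 1 := by rw [hb]; linarith
  set ε := min (m₀ / 2) ((1 - m₀) / 2) with hε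
  have hε0 : 0 < ε := lt_min (by linarith) (by linarith)
  have hball : ∀ x ∈ ball m₀ ε, 0 < x ∧ x ≤ b ∧ x < 1 := by
    intro x hx
    rw [mem_ball, Real.dist_eq, abs_lt] at hx
    have h1 : ε ≤ m₀ / 2 := min_le_left _ _
    have h2 : ε ≤ (1 - m₀) / 2 := min_le_right _ _
    refine ⟨by linarith [hx.1], by rw [hb]; linarith [hx.2], by linarith [hx.2]⟩
  have boundK_int : IntervalIntegrable
      (fun t => (1 / Real.sqrt (1 - b) ^ 3) * (1 / Real.sqrt (1 - t ^ 2))) volume 0 1 :=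
    intInt_inv_sqrt.const_mul _
  have boundE_int : IntervalIntegrable
      (fun t => (1 / Real.sqrt (1 - b)) * (1 / Real.sqrt (1 - t ^ 2))) volume 0 1 :=
    intInt_inv_sqrt.const_mul _
  have hKmain := intervalIntegral.hasDerivAt_integral_of_dominated_loc_of_deriv_le
    (F := fun x t => 1 / Real.sqrt ((1 - t ^ 2) * (1 - x * t ^ 2)))
    (F' := Kd) (a := (0:ℝ)) (b := 1) (μ := volume)
    (bound := fun t => (1 / Real.sqrt (1 - b) ^ 3) * (1 / Real.sqrt (1 - t ^ 2)))
    (ball_mem_nhds m₀ hε0)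
    (Filter.Eventually.of_forall fun x => (measurable_Kint x).aestronglyMeasurable)
    (intInt_Kint hm0.le hm1)
    ((measurable_Kd m₀).aestronglyMeasurable)
    (by
      filter_upwards [ae_uIoc_Ioo] with t h1 h2 x hx
      obtain ⟨hx0, hxb, _⟩ := hball x hx
      rw [Real.norm_eq_abs]
      exact abs_Kd_le hx0.le hxb hb1 (h1 h2))
    boundK_int
    (by
      filter_upwards [ae_uIoc_Ioo] with t h1 h2 x hx
      exact hasDerivAt_K x t (hball x hx).2.2 (h1 h2))
  have hEmain := intervalIntegral.hasDerivAt_integral_of_dominated_loc_of_deriv_le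
    (F := fun x t => Real.sqrt ((1 - x * t ^ 2) / (1 - t ^ 2)))
    (F' := Ed) (a := (0:ℝ)) (b := 1) (μ := volume)
    (bound := fun t => (1 / Real.sqrt (1 - b)) * (1 / Real.sqrt (1 - t ^ 2)))
    (ball_mem_nhds m₀ hε0)
    (Filter.Eventually.of_forall fun x => (measurable_Eint x).aestronglyMeasurable)
    (intInt_Eint hm0.le hm1)
    ((measurable_Ed m₀).aestronglyMeasurable)
    (by
      filter_upwards [ae_uIoc_Ioo] with t h1 h2 x hx
      obtain ⟨hx0, hxb, _⟩ := hball x hx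
      rw [Real.norm_eq_abs]
      exact abs_Ed_le hx0.le hxb hb1 (h1 h2))
    boundE_int
    (by
      filter_upwards [ae_uIoc_Ioo] with t h1 h2 x hx
      exact hasDerivAt_E x t (hball x hx).2.2 (h1 h2))
  constructor
  · have := hKmain.2
    rw [integral_Kd_eq hm0 hm1] at this
    exact this
  · have := hEmain.2
    rw [integral_Ed_eq hm0 hm1] at this
    exact this
end
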